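/- Let b be a nonzero rational number and let g_b : ℚ → ℚ be given by g_b(z) = −(z + b/z). Then g_b has no rational point of exact period n ≥ 5: for every nonzero z ∈ ℚ and every n ≥ 5, z is not a periodic point of g_b of minimal period n. Equivalently, for every nonzero z ∈ ℚ, Function.minimalPeriod g_b z ≤ 4. -/

import Mathlib

open Function

private def gbmap (b : ℚ) : ℚ → ℚ := fun w => -(w + b / w)

private lemma gbmap_zero (b : ℚ) : gbmap b 0 = 0 := by simp [gbmap]

private lemma gbmap_eq (b : ℚ) {w : ℚ} (hw : w ≠ 0) : gbmap b w = -((w ^ 2 + b) / w) := by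
  unfold gbmap
  field_simp

private lemma gbmap_neg (b w : ℚ) : gbmap b (-w) = -gbmap b w := by
  unfold gbmap
  rw [div_neg]
  ring

private lemma iter_fix_zero (b : ℚ) (m : ℕ) : (gbmap b)^[m] 0 = 0 :=
  Function.iterate_fixed (gbmap_zero b) m

/-- All iterates of a nonzero periodic point are nonzero. -/
private lemma iter_ne_zero {b z : ℚ} {n : ℕ} (hn : 0 < n)
    (hper : Function.IsPeriodicPt (gbmap b) n z) (hz : z ≠ 0) :
    ∀ k, (gbmap b)^[k] z ≠ 0 := by
  intro k hk0
  have hmul : (gbmap b)^[n * (k + 1)] z = z := hper.mul_const (k + 1)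
  have hk : k ≤ n * (k + 1) := by
    calc k ≤ k + 1 := Nat.le_succ k
    _ = 1 * (k + 1) := (one_mul _).symm
    _ ≤ n * (k + 1) := Nat.mul_le_mul_right _ hn
  have h1 : n * (k + 1) = (n * (k + 1) - k) + k := by omega
  rw [h1, Function.iterate_add_apply, hk0, iter_fix_zero] at hmul
  exact hz hmul.symm

section Valuation

variable {p : ℕ} [Fact p.Prime]

private lemma val_pow_two {w : ℚ} (hw : w ≠ 0) :
    padicValRat p (w ^ 2) = 2 * padicValRat p w := by
  rw [padicValRat.pow w]
  push_cast
  ring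

private lemma sum_ne_zero {b w : ℚ} (hw : w ≠ 0) (hfw : gbmap b w ≠ 0) :
    w ^ 2 + b ≠ 0 := by
  intro h0
  apply hfw
  rw [gbmap_eq b hw, h0]
  simp

/-- If `2 v(w) < v(b)` then `v(g w) = v(w)`. -/
private lemma stepA {b w : ℚ} (hb : b ≠ 0) (hw : w ≠ 0) (hfw : gbmap b w ≠ 0)
    (h : 2 * padicValRat p w < padicValRat p b) :
    padicValRat p (gbmap b w) = padicValRat p w := by
  have hw2 : w ^ 2 ≠ 0 := pow_ne_zero _ hw
  have hsum : w ^ 2 + b ≠ 0 := sum_ne_zero hw hfw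
  have hlt : padicValRat p (w ^ 2) < padicValRat p b := by rw [val_pow_two hw]; exact h
  have hadd : padicValRat p (w ^ 2 + b) = 2 * padicValRat p w := by
    rw [padicValRat.add_eq_of_lt hsum hw2 hb hlt, val_pow_two hw]
  rw [gbmap_eq b hw, padicValRat.neg, padicValRat.div hsum hw, hadd]
  ring

/-- If `v(b) < 2 v(w)` then `v(g w) = v(b) - v(w)`. -/
private lemma stepB {b w : ℚ} (hb : b ≠ 0) (hw : w ≠ 0) (hfw : gbmap b w ≠ 0)
    (h : padicValRat p b < 2 * padicValRat p w) :
    padicValRat p (gbmap b w) = padicValRat p b - padicValRat p w := by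
  have hw2 : w ^ 2 ≠ 0 := pow_ne_zero _ hw
  have hsum : w ^ 2 + b ≠ 0 := sum_ne_zero hw hfw
  have hlt : padicValRat p b < padicValRat p (w ^ 2) := by rw [val_pow_two hw]; exact h
  have hadd : padicValRat p (w ^ 2 + b) = padicValRat p b := by
    rw [add_comm, padicValRat.add_eq_of_lt (by rwa [add_comm]) hb hw2 hlt]
  rw [gbmap_eq b hw, padicValRat.neg, padicValRat.div hsum hw, hadd]

/-- A periodic point never satisfies `v(b) < 2 v(z)`. -/
private lemma noBig {b z : ℚ} {n : ℕ} (hb : b ≠ 0) (hz : z ≠ 0)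
    (hiter : ∀ k, (gbmap b)^[k] z ≠ 0) (hn : 0 < n)
    (hper : Function.IsPeriodicPt (gbmap b) n z) :
    2 * padicValRat p z ≤ padicValRat p b := by
  by_contra hcon
  push_neg at hcon
  have key : ∀ k, padicValRat p ((gbmap b)^[k + 1] z) =
      padicValRat p b - padicValRat p z := by
    intro k
    induction k with
    | zero =>
      have h1 : (gbmap b)^[1] z = gbmap b z := Function.iterate_one _ ▸ rfl
      rw [h1]
      exact stepB hb hz (h1 ▸ hiter 1) hcon
    | succ k ih =>
      have h1 : (gbmap b)^[k + 1 + 1] z = gbmap b ((gbmap b)^[k + 1] z) :=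
        Function.iterate_succ_apply' _ _ _
      rw [h1, stepA hb (hiter (k + 1)) (h1 ▸ hiter (k + 1 + 1)) (by rw [ih]; linarith)]
      exact ih
  have h2 := key (n - 1)
  have h3 : n - 1 + 1 = n := Nat.succ_pred_eq_of_pos hn
  rw [h3] at h2
  have h4 : (gbmap b)^[n] z = z := hper
  rw [h4] at h2
  linarith

/-- The valuation is preserved along a periodic orbit. -/
private lemma val_eq {b z : ℚ} {n : ℕ} (hb : b ≠ 0) (hz : z ≠ 0)
    (hiter : ∀ k, (gbmap b)^[k] z ≠ 0) (hn : 0 < n)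
    (hper : Function.IsPeriodicPt (gbmap b) n z) :
    padicValRat p (gbmap b z) = padicValRat p z := by
  have h1 := noBig (p := p) hb hz hiter hn hper
  have hgz : gbmap b z ≠ 0 := by
    have := hiter 1
    rwa [Function.iterate_one] at this
  have hgiter : ∀ k, (gbmap b)^[k] (gbmap b z) ≠ 0 := by
    intro k
    have := hiter (k + 1)
    rwa [Function.iterate_succ_apply] at this
  have h2 := noBig (p := p) hb hgz hgiter hn hper.apply
  rcases lt_or_eq_of_le h1 with hlt | heq
  · exact stepA hb hz hgz hlt
  · have hsum : z ^ 2 + b ≠ 0 := sum_ne_zero hz hgz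
    have hmin := padicValRat.min_le_padicValRat_add (p := p) hsum
    rw [val_pow_two hz, ← heq, min_self] at hmin
    have hge : padicValRat p z ≤ padicValRat p (gbmap b z) := by
      rw [gbmap_eq b hz, padicValRat.neg, padicValRat.div hsum hz]
      linarith
    linarith

end Valuation

/-- A nonzero rational all of whose `p`-adic valuations vanish is `±1`. -/
private lemma eq_one_or_neg_one {q : ℚ} (hq : q ≠ 0)
    (h : ∀ p : ℕ, p.Prime → padicValRat p q = 0) : q = 1 ∨ q = -1 := by
  have hnum : q.num ≠ 0 := Rat.num_ne_zero.2 hq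
  have hden : q.den = 1 := by
    by_contra hd
    obtain ⟨p, hp, hpd⟩ := Nat.exists_prime_and_dvd hd
    haveI : Fact p.Prime := ⟨hp⟩
    have h1 : 1 ≤ padicValNat p q.den := one_le_padicValNat_of_dvd q.pos.ne' hpd
    have h2 : padicValInt p q.num = 0 := by
      show padicValNat p q.num.natAbs = 0
      apply padicValNat.eq_zero_of_not_dvd
      intro hdvd
      have hg : p ∣ Nat.gcd q.num.natAbs q.den := Nat.dvd_gcd hdvd hpd
      rw [Nat.Coprime.gcd_eq_one q.reduced] at hg
      exact hp.ne_one (Nat.dvd_one.mp hg)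
    have h3 := h p hp
    rw [padicValRat_def, h2] at h3
    omega
  have hnum1 : q.num.natAbs = 1 := by
    by_contra hnn
    obtain ⟨p, hp, hpd⟩ := Nat.exists_prime_and_dvd hnn
    haveI : Fact p.Prime := ⟨hp⟩
    have h1 : 1 ≤ padicValNat p q.num.natAbs :=
      one_le_padicValNat_of_dvd (Nat.pos_of_ne_zero (Int.natAbs_ne_zero.2 hnum)).ne' hpd
    have h3 := h p hp
    rw [padicValRat_def, hden] at h3
    simp only [padicValNat.one, Nat.cast_zero, sub_zero] at h3
    have : padicValInt p q.num = 0 := by exact_mod_cast h3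
    rw [padicValInt] at this
    omega
  have hq' : (q.num : ℚ) = q := (Rat.den_eq_one_iff q).mp hden
  rcases Int.natAbs_eq_iff.mp hnum1 with h1 | h1
  · left; rw [← hq', h1]; norm_num
  · right; rw [← hq', h1]; norm_num

/-- The map `z ↦ -(z + b/z)` (with `b ∈ ℚ*`) has no rational point of exact period `n ≥ 5`:
every nonzero rational point has minimal period at most `4`. -/
theorem no_large_period_neg (b : ℚ) (hb : b ≠ 0) (z : ℚ) (hz : z ≠ 0) :
    Function.minimalPeriod (fun w : ℚ => -(w + b / w)) z ≤ 4 := by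
  show Function.minimalPeriod (gbmap b) z ≤ 4
  rcases Nat.eq_zero_or_pos (Function.minimalPeriod (gbmap b) z) with h0 | hpos
  · rw [h0]; norm_num
  · have hper : Function.IsPeriodicPt (gbmap b) (Function.minimalPeriod (gbmap b) z) z :=
      Function.isPeriodicPt_minimalPeriod (gbmap b) z
    have hiter := iter_ne_zero hpos hper hz
    have hgz : gbmap b z ≠ 0 := by
      have := hiter 1
      rwa [Function.iterate_one] at this
    have hval : ∀ p : ℕ, p.Prime → padicValRat p (gbmap b z / z) = 0 := by
      intro p hp
      haveI : Fact p.Prime := ⟨hp⟩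
      rw [padicValRat.div hgz hz, val_eq hb hz hiter hpos hper]
      ring
    rcases eq_one_or_neg_one (div_ne_zero hgz hz) hval with h1 | h1
    · have hfix : gbmap b z = z := by
        field_simp at h1
        exact h1
      have hp1 : Function.IsPeriodicPt (gbmap b) 1 z := by
        show (gbmap b)^[1] z = z
        rwa [Function.iterate_one]
      exact le_trans (hp1.minimalPeriod_le Nat.one_pos) (by norm_num)
    · have hfix : gbmap b z = -z := by
        rw [div_eq_iff hz] at h1
        rw [h1]; ring
      have hp2 : Function.IsPeriodicPt (gbmap b) 2 z := by
        show (gbmap b)^[2] z = z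
        have h2 : (gbmap b)^[2] z = gbmap b (gbmap b z) := rfl
        rw [h2, hfix, gbmap_neg, hfix, neg_neg]
      exact le_trans (hp2.minimalPeriod_le (by norm_num)) (by norm_num)
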